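/- Let d ≥ 3 and n ≥ 2 be integers, and let x = x_1...x_n and y = y_1...y_n be vertices of the undirected de Bruijn graph B(d,n) with d(x,y) = n. Let y_0, y_{n+1} ∈ {0,...,d-1} be arbitrary, let x_0 ∈ {0,...,d-1} \ {y_n, y_{n+1}}, and let x_{n+1} ∈ {0,...,d-1} \ {y_0, y_1}. Then in the undirected de Bruijn graph B(d, n+2), the distance between the strings x_0 x_1 ... x_n x_{n+1} and y_0 y_1 ... y_n y_{n+1} equals n+2. -/

import Mathlib

/-- The undirected de Bruijn graph `B(d,n)`: vertices are strings of length `n`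
over the alphabet `{0, ..., d-1}`, and two distinct strings `x`, `y` are adjacent
iff `x_{i+1} = y_i` for all valid `i`, or `y_{i+1} = x_i` for all valid `i`. -/
def deBruijnGraph (d n : ℕ) : SimpleGraph (Fin n → Fin d) where
  Adj x y := x ≠ y ∧
    ((∀ i : Fin n, ∀ h : (i : ℕ) + 1 < n, x ⟨(i : ℕ) + 1, h⟩ = y i) ∨
     (∀ i : Fin n, ∀ h : (i : ℕ) + 1 < n, y ⟨(i : ℕ) + 1, h⟩ = x i))
  symm := ⟨fun x y ⟨hxy, h⟩ => ⟨hxy.symm, h.symm⟩⟩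
  loopless := ⟨fun x ⟨hxx, _⟩ => hxx rfl⟩

/-- The ball of radius `t` around a vertex `x`. -/
def ball {V : Type*} (G : SimpleGraph V) (t : ℕ) (x : V) : Set V :=
  {y | G.dist x y ≤ t}

/-- A set `S` of vertices is a `t`-identifying code if every ball of radius `t`
meets `S`, and distinct vertices have distinct identifying sets `B_t(x) ∩ S`. -/
def IsIdentifyingCode {V : Type*} (G : SimpleGraph V) (t : ℕ) (S : Set V) : Prop :=
  (∀ x : V, (ball G t x ∩ S).Nonempty) ∧
  ∀ x y : V, x ≠ y → ball G t x ∩ S ≠ ball G t y ∩ S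

lemma fin_congr {d N : ℕ} (f : Fin N → Fin d) {a b : ℕ} (ha : a < N) (hb : b < N)
    (h : a = b) : f ⟨a, ha⟩ = f ⟨b, hb⟩ := by subst h; rfl

lemma exists_walk_left {d N : ℕ} (t : ℕ) (u v : Fin N → Fin d)
    (h : ∀ (i : ℕ) (hi : i + t < N), v ⟨i, by omega⟩ = u ⟨i + t, hi⟩) :
    ∃ p : (deBruijnGraph d N).Walk u v, p.length ≤ t := by
  induction t generalizing u with
  | zero =>
    have huv : u = v := by
      funext i
      exact (h i.1 i.isLt).symm
    subst huv
    exact ⟨.nil, by simp⟩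
  | succ t ih =>
    by_cases hN : N = 0
    · subst hN
      have huv : u = v := funext fun i => i.elim0
      subst huv
      exact ⟨.nil, by simp⟩
    · set w : Fin N → Fin d := fun i =>
        if h2 : (i : ℕ) + 1 < N then u ⟨(i : ℕ) + 1, h2⟩ else v ⟨N - 1 - t, by omega⟩
        with hw
      have hwcond : ∀ (i : ℕ) (hi : i + t < N), v ⟨i, by omega⟩ = w ⟨i + t, hi⟩ := by
        intro i hi
        show v _ = if h2 : (i + t) + 1 < N then u ⟨(i + t) + 1, h2⟩ else v ⟨N - 1 - t, by omega⟩
        split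
        · next h2 => exact h i h2
        · next h2 => exact fin_congr v _ _ (by omega)
      obtain ⟨p, hp⟩ := ih w hwcond
      rcases eq_or_ne u w with hu | hu
      · rw [hu]
        exact ⟨p, by omega⟩
      · have hadj : (deBruijnGraph d N).Adj u w := by
          refine ⟨hu, Or.inl fun i hh => ?_⟩
          show u ⟨(i : ℕ) + 1, hh⟩ =
            if h2 : (i : ℕ) + 1 < N then u ⟨(i : ℕ) + 1, h2⟩ else v ⟨N - 1 - t, by omega⟩
          rw [dif_pos hh]
        exact ⟨.cons hadj p, by simp only [SimpleGraph.Walk.length_cons]; omega⟩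

lemma exists_walk_right {d N : ℕ} (t : ℕ) (u v : Fin N → Fin d)
    (h : ∀ (i : ℕ) (hi : i < N) (ht : t ≤ i),
      v ⟨i, hi⟩ = u ⟨i - t, Nat.lt_of_le_of_lt (Nat.sub_le i t) hi⟩) :
    ∃ p : (deBruijnGraph d N).Walk u v, p.length ≤ t := by
  induction t generalizing u with
  | zero =>
    have huv : u = v := by
      funext i
      exact (h i.1 i.isLt (Nat.zero_le _)).symm
    subst huv
    exact ⟨.nil, by simp⟩
  | succ t ih =>
    set w : Fin N → Fin d := fun i =>
      if h2 : 1 ≤ (i : ℕ) then u ⟨(i : ℕ) - 1, Nat.lt_of_le_of_lt (Nat.sub_le _ _) i.isLt⟩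
      else if h3 : t < N then v ⟨t, h3⟩ else u i
      with hw
    have hwcond : ∀ (i : ℕ) (hi : i < N) (ht : t ≤ i),
        v ⟨i, hi⟩ = w ⟨i - t, Nat.lt_of_le_of_lt (Nat.sub_le i t) hi⟩ := by
      intro i hi ht
      show v _ = if h2 : 1 ≤ i - t then u ⟨(i - t) - 1, _⟩ else if h3 : t < N then v ⟨t, h3⟩ else _
      split
      · next h2 =>
        refine (h i hi (by omega)).trans (fin_congr u _ _ (by omega))
      · next h2 =>
        rw [dif_pos (by omega : t < N)]
        exact fin_congr v _ _ (by omega)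
    obtain ⟨p, hp⟩ := ih w hwcond
    rcases eq_or_ne u w with hu | hu
    · rw [hu]
      exact ⟨p, by omega⟩
    · have hadj : (deBruijnGraph d N).Adj u w := by
        refine ⟨hu, Or.inr fun i hh => ?_⟩
        show (if h2 : 1 ≤ (i : ℕ) + 1 then u ⟨(i : ℕ) + 1 - 1, _⟩ else _) = u i
        rw [dif_pos (by omega)]
        exact fin_congr u _ i.isLt (by omega)
      exact ⟨.cons hadj p, by simp only [SimpleGraph.Walk.length_cons]; omega⟩

lemma walk_window {d N : ℕ} {u v : Fin N → Fin d} (p : (deBruijnGraph d N).Walk u v) :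
    ∃ (M mneg : ℕ) (net : ℤ), -(mneg : ℤ) ≤ net ∧ net ≤ (M : ℤ) ∧
      2 * M + 2 * mneg ≤ p.length + net.natAbs ∧
      ∀ (i j : ℕ), (j : ℤ) = (i : ℤ) - net → M ≤ i → i + mneg < N →
        ∀ (hi : i < N) (hj : j < N), u ⟨i, hi⟩ = v ⟨j, hj⟩ := by
  induction p with
  | nil =>
    refine ⟨0, 0, 0, by simp, by simp, by simp, fun i j hji _ _ hi hj => ?_⟩
    exact fin_congr _ _ _ (by omega)
  | @cons u w v hadj p ih =>
    obtain ⟨M, mneg, net, h1, h2, h3, hwin⟩ := ih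
    obtain ⟨hne, hLR⟩ := id hadj
    rcases hLR with hL | hR
    · refine ⟨M + 1, mneg - 1, net + 1, by omega, by omega,
        by simp only [SimpleGraph.Walk.length_cons]; omega, ?_⟩
      intro i j hji hMi hiN hi hj
      have hi1 : 1 ≤ i := by omega
      have hstep : u ⟨i, hi⟩ = w ⟨i - 1, by omega⟩ := by
        refine (fin_congr u hi (by omega) (by omega : i = (i-1) + 1)).trans ?_
        exact hL ⟨i - 1, by omega⟩ (show (i - 1) + 1 < N by omega)
      have a1 : (j : ℤ) = ((i - 1 : ℕ) : ℤ) - net := by omega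
      have a2 : M ≤ i - 1 := by omega
      have a3 : (i - 1) + mneg < N := by omega
      have a4 : i - 1 < N := by omega
      exact hstep.trans (hwin (i - 1) j a1 a2 a3 a4 hj)
    · refine ⟨M - 1, mneg + 1, net - 1, by omega, by omega,
        by simp only [SimpleGraph.Walk.length_cons]; omega, ?_⟩
      intro i j hji hMi hiN hi hj
      have hstep : u ⟨i, hi⟩ = w ⟨i + 1, by omega⟩ := (hR ⟨i, hi⟩ (show i + 1 < N by omega)).symm
      have a1 : (j : ℤ) = ((i + 1 : ℕ) : ℤ) - net := by omega
      have a2 : M ≤ i + 1 := by omega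
      have a3 : (i + 1) + mneg < N := by omega
      have a4 : i + 1 < N := by omega
      exact hstep.trans (hwin (i + 1) j a1 a2 a3 a4 hj)

lemma dist_le_window {d n : ℕ} (hn : 0 < n) (x y : Fin n → Fin d)
    (A B : ℕ) (c : ℤ) (hc1 : -(B : ℤ) ≤ c) (hc2 : c ≤ (A : ℤ)) (hAB : A + B < n)
    (hmatch : ∀ (i j : ℕ), (j : ℤ) = (i : ℤ) - c → A ≤ i → i + B < n →
      ∀ (hi : i < n) (hj : j < n), x ⟨i, hi⟩ = y ⟨j, hj⟩) :
    ∃ q : (deBruijnGraph d n).Walk x y, q.length + c.natAbs ≤ 2 * A + 2 * B := by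
  rcases le_or_gt 0 c with hc | hc
  · set c' : ℕ := c.toNat with hc'
    have hc'A : c' ≤ A := by omega
    set z1 : Fin n → Fin d := fun i =>
      if h2 : B ≤ (i : ℕ) then x ⟨(i : ℕ) - B, Nat.lt_of_le_of_lt (Nat.sub_le _ _) i.isLt⟩
      else x i with hz1
    set z2 : Fin n → Fin d := fun i =>
      if h2 : (i : ℕ) + (A - c') < n then y ⟨(i : ℕ) + (A - c'), h2⟩
      else y ⟨n - 1, by omega⟩ with hz2
    obtain ⟨q1, hq1⟩ := exists_walk_right (d := d) (N := n) B x z1 (by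
      intro i hi ht
      show (if h2 : B ≤ i then x ⟨i - B, _⟩ else x ⟨i, hi⟩) = x ⟨i - B, _⟩
      rw [dif_pos ht])
    obtain ⟨q2, hq2⟩ := exists_walk_left (d := d) (N := n) (A + B) z1 z2 (by
      intro i hi
      show (if h2 : i + (A - c') < n then y ⟨i + (A - c'), h2⟩ else y ⟨n - 1, _⟩)
        = if h2 : B ≤ i + (A + B) then x ⟨i + (A + B) - B, _⟩ else _
      rw [dif_pos (by omega : i + (A - c') < n), dif_pos (by omega : B ≤ i + (A + B))]
      refine ((hmatch (i + A) (i + (A - c')) (by omega) (by omega) (by omega)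
        (by omega) (by omega)).symm).trans ?_
      exact fin_congr x _ _ (by omega))
    obtain ⟨q3, hq3⟩ := exists_walk_right (d := d) (N := n) (A - c') z2 y (by
      intro i hi ht
      show y ⟨i, hi⟩ = if h2 : (i - (A - c')) + (A - c') < n then y ⟨(i - (A - c')) + (A - c'), h2⟩
        else y ⟨n - 1, _⟩
      rw [dif_pos (by omega : (i - (A - c')) + (A - c') < n)]
      exact fin_congr y _ _ (by omega))
    refine ⟨q1.append (q2.append q3), ?_⟩
    simp only [SimpleGraph.Walk.length_append]
    omega
  · set c' : ℕ := (-c).toNat with hc'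
    have hc'B : c' ≤ B := by omega
    set z1 : Fin n → Fin d := fun i =>
      if h2 : (i : ℕ) + A < n then x ⟨(i : ℕ) + A, h2⟩ else x ⟨n - 1, by omega⟩ with hz1
    set z2 : Fin n → Fin d := fun i =>
      if h2 : B ≤ (i : ℕ) + c' ∧ (i : ℕ) + c' - B < n then y ⟨(i : ℕ) + c' - B, h2.2⟩
      else y ⟨n - 1, by omega⟩ with hz2
    obtain ⟨q1, hq1⟩ := exists_walk_left (d := d) (N := n) A x z1 (by
      intro i hi
      show (if h2 : i + A < n then x ⟨i + A, h2⟩ else x ⟨n - 1, _⟩) = x ⟨i + A, hi⟩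
      rw [dif_pos hi])
    obtain ⟨q2, hq2⟩ := exists_walk_right (d := d) (N := n) (A + B) z1 z2 (by
      intro i hi ht
      show (if h2 : B ≤ i + c' ∧ i + c' - B < n then y ⟨i + c' - B, h2.2⟩ else y ⟨n - 1, _⟩)
        = if h2 : (i - (A + B)) + A < n then x ⟨(i - (A + B)) + A, h2⟩ else x ⟨n - 1, _⟩
      rw [dif_pos (⟨by omega, by omega⟩ : B ≤ i + c' ∧ i + c' - B < n),
        dif_pos (by omega : (i - (A + B)) + A < n)]
      refine ((hmatch (i - B) (i + c' - B) (by omega) (by omega) (by omega)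
        (by omega) (by omega)).symm).trans ?_
      exact fin_congr x _ _ (by omega))
    obtain ⟨q3, hq3⟩ := exists_walk_left (d := d) (N := n) (B - c') z2 y (by
      intro i hi
      show y ⟨i, _⟩ = if h2 : B ≤ (i + (B - c')) + c' ∧ (i + (B - c')) + c' - B < n
        then y ⟨(i + (B - c')) + c' - B, h2.2⟩ else y ⟨n - 1, _⟩
      rw [dif_pos (⟨by omega, by omega⟩ : B ≤ (i + (B - c')) + c' ∧ (i + (B - c')) + c' - B < n)]
      exact fin_congr y _ _ (by omega))
    refine ⟨q1.append (q2.append q3), ?_⟩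
    simp only [SimpleGraph.Walk.length_append]
    omega

lemma ext_eval0 {d n : ℕ} (x : Fin n → Fin d) (x0 xn1 : Fin d) (h : 0 < n + 2) :
    (Fin.snoc (Fin.cons x0 x) xn1 : Fin (n + 2) → Fin d) ⟨0, h⟩ = x0 := by
  have e1 : (⟨0, h⟩ : Fin (n + 2)) = Fin.castSucc 0 := by apply Fin.ext; simp
  rw [e1, Fin.snoc_castSucc, Fin.cons_zero]

lemma ext_evalmid {d n : ℕ} (x : Fin n → Fin d) (x0 xn1 : Fin d) (i : ℕ) (h : i < n)
    (h2 : i + 1 < n + 2) :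
    (Fin.snoc (Fin.cons x0 x) xn1 : Fin (n + 2) → Fin d) ⟨i + 1, h2⟩ = x ⟨i, h⟩ := by
  have e1 : (⟨i + 1, h2⟩ : Fin (n + 2)) = Fin.castSucc ⟨i + 1, by omega⟩ := by
    apply Fin.ext; simp
  rw [e1, Fin.snoc_castSucc]
  have e2 : (⟨i + 1, by omega⟩ : Fin (n + 1)) = Fin.succ ⟨i, h⟩ := by apply Fin.ext; simp
  rw [e2, Fin.cons_succ]

lemma ext_evaltop {d n : ℕ} (x : Fin n → Fin d) (x0 xn1 : Fin d) (h : n + 1 < n + 2) :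
    (Fin.snoc (Fin.cons x0 x) xn1 : Fin (n + 2) → Fin d) ⟨n + 1, h⟩ = xn1 := by
  have e1 : (⟨n + 1, h⟩ : Fin (n + 2)) = Fin.last (n + 1) := by apply Fin.ext; simp
  rw [e1, Fin.snoc_last]

theorem dist_extension (d n : ℕ) (hd : 3 ≤ d) (hn : 2 ≤ n)
    (x y : Fin n → Fin d) (hxy : (deBruijnGraph d n).dist x y = n)
    (y0 yn1 x0 xn1 : Fin d)
    (hx0a : x0 ≠ y ⟨n - 1, by omega⟩) (hx0b : x0 ≠ yn1)
    (hxn1a : xn1 ≠ y0) (hxn1b : xn1 ≠ y ⟨0, by omega⟩) :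
    (deBruijnGraph d (n + 2)).dist (Fin.snoc (Fin.cons x0 x) xn1)
      (Fin.snoc (Fin.cons y0 y) yn1) = n + 2 := by
  obtain ⟨x', hx'def⟩ : ∃ x', x' = (Fin.snoc (Fin.cons x0 x) xn1 : Fin (n + 2) → Fin d) :=
    ⟨_, rfl⟩
  obtain ⟨y', hy'def⟩ : ∃ y', y' = (Fin.snoc (Fin.cons y0 y) yn1 : Fin (n + 2) → Fin d) :=
    ⟨_, rfl⟩
  rw [← hx'def, ← hy'def]
  have hx'0 : ∀ h, x' ⟨0, h⟩ = x0 := fun h => by rw [hx'def]; exact ext_eval0 x x0 xn1 h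
  have hx'mid : ∀ (i : ℕ) (h : i < n) (h2 : i + 1 < n + 2), x' ⟨i + 1, h2⟩ = x ⟨i, h⟩ :=
    fun i h h2 => by rw [hx'def]; exact ext_evalmid x x0 xn1 i h h2
  have hx'top : ∀ h, x' ⟨n + 1, h⟩ = xn1 := fun h => by rw [hx'def]; exact ext_evaltop x x0 xn1 h
  have hy'0 : ∀ h, y' ⟨0, h⟩ = y0 := fun h => by rw [hy'def]; exact ext_eval0 y y0 yn1 h
  have hy'mid : ∀ (i : ℕ) (h : i < n) (h2 : i + 1 < n + 2), y' ⟨i + 1, h2⟩ = y ⟨i, h⟩ :=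
    fun i h h2 => by rw [hy'def]; exact ext_evalmid y y0 yn1 i h h2
  have hy'top : ∀ h, y' ⟨n + 1, h⟩ = yn1 := fun h => by rw [hy'def]; exact ext_evaltop y y0 yn1 h
  clear hx'def hy'def
  have hy'n : ∀ h : n < n + 2, y' ⟨n, h⟩ = y ⟨n - 1, by omega⟩ := by
    intro h
    refine (fin_congr y' h (by omega) (by omega : n = (n - 1) + 1)).trans ?_
    exact hy'mid (n - 1) (by omega) (by omega)
  obtain ⟨p0, hp0⟩ := exists_walk_left (d := d) (N := n + 2) (n + 2) x' y'
    (fun i hi => absurd hi (by omega))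
  have hub : (deBruijnGraph d (n + 2)).dist x' y' ≤ n + 2 :=
    le_trans (SimpleGraph.dist_le p0) hp0
  by_contra hne2
  have hlt : (deBruijnGraph d (n + 2)).dist x' y' ≤ n + 1 := by omega
  obtain ⟨p, hp⟩ := SimpleGraph.Reachable.exists_walk_length_eq_dist
    (⟨p0⟩ : (deBruijnGraph d (n + 2)).Reachable x' y')
  have hplen : p.length ≤ n + 1 := by omega
  obtain ⟨M, mneg, net, h1, h2, h3, hwin⟩ := walk_window p
  -- boundary fact for M = 0
  have hFM : M = 0 → -net ≤ (n : ℤ) - 1 := by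
    intro hM0
    by_contra hbig
    push_neg at hbig
    have hj1 : net.natAbs = n ∨ net.natAbs = n + 1 := by omega
    have key := hwin 0 net.natAbs (by omega) (by omega) (by omega) (by omega) (by omega)
    rw [hx'0] at key
    rcases hj1 with hj | hj
    · exact hx0a ((key.trans (fin_congr y' (by omega) (by omega) hj)).trans (hy'n (by omega)))
    · exact hx0b ((key.trans (fin_congr y' (by omega) (by omega) hj)).trans (hy'top (by omega)))
  have hFm : mneg = 0 → net ≤ (n : ℤ) - 1 := by
    intro hm0
    by_contra hbig
    push_neg at hbig
    have hj1 : (n + 1) - net.toNat = 1 ∨ (n + 1) - net.toNat = 0 := by omega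
    have key := hwin (n + 1) ((n + 1) - net.toNat) (by omega) (by omega) (by omega)
      (by omega) (by omega)
    rw [hx'top] at key
    rcases hj1 with hj | hj
    · refine hxn1b ((key.trans (fin_congr y' (by omega) (by omega) hj)).trans ?_)
      exact hy'mid 0 (by omega) (by omega)
    · exact hxn1a ((key.trans (fin_congr y' (by omega) (by omega) hj)).trans (hy'0 (by omega)))
  have hFM' : 1 ≤ M ∨ -net ≤ (n : ℤ) - 1 := by
    by_cases hM0 : M = 0
    · exact Or.inr (hFM hM0)
    · exact Or.inl (by omega)
  have hFm' : 1 ≤ mneg ∨ net ≤ (n : ℤ) - 1 := by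
    by_cases hm0 : mneg = 0
    · exact Or.inr (hFm hm0)
    · exact Or.inl (by omega)
  have hMm : M + mneg ≤ n + 1 := by omega
  have hnetlb : -(n : ℤ) ≤ net := by rcases hFM' with hb | hb <;> omega
  have hnetub : net ≤ (n : ℤ) := by rcases hFm' with hb | hb <;> omega
  obtain ⟨A, hAdef⟩ : ∃ A : ℕ, A = (max (max M 1) (net.toNat + 1)) - 1 := ⟨_, rfl⟩
  obtain ⟨B, hBdef⟩ : ∃ B : ℕ, B = n - min (min (n + 1 - mneg) n) (((n : ℤ) + net).toNat) :=
    ⟨_, rfl⟩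
  have hAfacts : (M ≤ A + 1) ∧ (net ≤ (A : ℤ)) ∧ (A + 1 = M ∨ A = 0 ∨ (A : ℤ) = net) := by
    omega
  have hBfacts : ((B : ℤ) ≥ mneg - 1) ∧ (-(B : ℤ) ≤ net) ∧ (B ≤ n) ∧
      ((B : ℤ) = mneg - 1 ∨ B = 0 ∨ (B : ℤ) = -net) := by
    omega
  clear hAdef hBdef
  have hmatch : ∀ (i j : ℕ), (j : ℤ) = (i : ℤ) - net → A ≤ i → i + B < n →
      ∀ (hi : i < n) (hj : j < n), x ⟨i, hi⟩ = y ⟨j, hj⟩ := by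
    intro i j hji hA hB hi hj
    have b1 : (j + 1 : ℕ) < n + 2 := by omega
    have b2 : (i + 1 : ℕ) < n + 2 := by omega
    have key := hwin (i + 1) (j + 1) (by omega)
      (by omega) (by omega) b2 b1
    calc x ⟨i, hi⟩ = x' ⟨i + 1, b2⟩ := (hx'mid i hi b2).symm
      _ = y' ⟨j + 1, b1⟩ := key
      _ = y ⟨j, hj⟩ := hy'mid j hj b1
  have hc1 : -(B : ℤ) ≤ net := hBfacts.2.1
  have hc2 : net ≤ (A : ℤ) := hAfacts.2.1
  have hAB : A + B < n := by
    rcases hFM' with hb | hb <;> rcases hFm' with hb2 | hb2 <;> omega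
  obtain ⟨q, hq⟩ := dist_le_window (by omega) x y A B net hc1 hc2 hAB hmatch
  have hdq : (deBruijnGraph d n).dist x y ≤ q.length := SimpleGraph.dist_le q
  have hfin : 2 * A + 2 * B ≤ (n - 1) + net.natAbs := by
    rcases hFM' with hb | hb <;> rcases hFm' with hb2 | hb2 <;> omega
  omega
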